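/- If P is a Young tableau with strictly increasing rows and strictly increasing columns, then Edelman–Greene insertion of its reading word r(P) (reading rows left to right, from the bottom row up) reproduces P, i.e., P(r(P)) = P. -/

import Mathlib

/-- The adjacent transposition `s_a` (1-indexed letter `a`) acting on positions `Fin n`. -/
def adjT (n a : ℕ) : Equiv.Perm (Fin n) :=
  if h : 1 ≤ a ∧ a < n then Equiv.swap ⟨a - 1, by omega⟩ ⟨a, h.2⟩ else 1

/-- The permutation `s_{w_1} ∘ s_{w_2} ∘ ⋯ ∘ s_{w_m}` of a word, transpositions acting on
positions composed from the left (`s_{w_1}` applied first to the identity). -/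
def permOfWord (n : ℕ) (w : List ℕ) : Equiv.Perm (Fin n) :=
  (w.map (adjT n)).prod

/-- The set of inversions of a permutation. -/
def invSet {n : ℕ} (σ : Equiv.Perm (Fin n)) : Set (Fin n × Fin n) :=
  {p | p.1 < p.2 ∧ σ p.2 < σ p.1}

/-- The number of inversions. -/
noncomputable def invNum {n : ℕ} (σ : Equiv.Perm (Fin n)) : ℕ := (invSet σ).ncard

/-- `w` is a reduced word for `σ`: letters in `[n-1]`, the product of the corresponding
adjacent transpositions is `σ`, and the length is `inv σ`. -/
def IsReducedWord (n : ℕ) (σ : Equiv.Perm (Fin n)) (w : List ℕ) : Prop :=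
  (∀ a ∈ w, 1 ≤ a ∧ a < n) ∧ permOfWord n w = σ ∧ w.length = invNum σ

/-- `σ` avoids the pattern 132. -/
def Avoids132 {n : ℕ} (σ : Equiv.Perm (Fin n)) : Prop :=
  ¬ ∃ i1 i2 i3 : Fin n, i1 < i2 ∧ i2 < i3 ∧ σ i1 < σ i3 ∧ σ i3 < σ i2

/-- `σ` avoids the pattern 312. -/
def Avoids312 {n : ℕ} (σ : Equiv.Perm (Fin n)) : Prop :=
  ¬ ∃ i1 i2 i3 : Fin n, i1 < i2 ∧ i2 < i3 ∧ σ i2 < σ i3 ∧ σ i3 < σ i1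

/-- The Rothe diagram of `σ` (permutation matrix with 1s at `(σ i, i)`, 0-indexed):
cells strictly north of the 1 in their column and strictly west of the 1 in their row. -/
def rothe {n : ℕ} (σ : Equiv.Perm (Fin n)) : Set (Fin n × Fin n) :=
  {p | p.1 < σ p.2 ∧ p.2 < σ.symm p.1}

/-- Two cells are adjacent if they share an edge. -/
def adjCell {n : ℕ} (p q : Fin n × Fin n) : Prop :=
  (p.1 = q.1 ∧ ((p.2 : ℕ) + 1 = q.2 ∨ (q.2 : ℕ) + 1 = p.2)) ∨
  (p.2 = q.2 ∧ ((p.1 : ℕ) + 1 = q.1 ∨ (q.1 : ℕ) + 1 = p.1))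

/-- The connected component of the Rothe diagram containing the (0-indexed) cell `(0,0)`,
empty if `(0,0)` is not in the diagram. -/
def comp11 {n : ℕ} (σ : Equiv.Perm (Fin n)) : Set (Fin n × Fin n) :=
  {p | ∃ h0 : 0 < n,
    Relation.ReflTransGen (fun a b => a ∈ rothe σ ∧ b ∈ rothe σ ∧ adjCell a b)
      (⟨⟨0, h0⟩, ⟨0, h0⟩⟩) p ∧
    p ∈ rothe σ ∧ ((⟨⟨0, h0⟩, ⟨0, h0⟩⟩ : Fin n × Fin n)) ∈ rothe σ}

/-- Edelman–Greene insertion of `x` into a single (strictly increasing) row: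
returns the new row and the optional entry bumped into the next row. -/
def insRow (x : ℕ) : List ℕ → List ℕ × Option ℕ
  | [] => ([x], none)
  | z :: zs =>
    if z < x then
      let r := insRow x zs
      (z :: r.1, r.2)
    else if z = x then (z :: zs, some (z + 1))
    else (x :: zs, some z)

/-- Edelman–Greene insertion of `x` into a tableau (list of rows). -/
def insTab (x : ℕ) : List (List ℕ) → List (List ℕ)
  | [] => [[x]]
  | r :: rs =>
    let p := insRow x r
    match p.2 with
    | none => p.1 :: rs
    | some y => p.1 :: insTab y rs

/-- The Edelman–Greene insertion tableau `P(w)`. -/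
def Ptab (w : List ℕ) : List (List ℕ) := w.foldl (fun t x => insTab x t) []

/-- Add the label `k` to the recording tableau `q` at the unique new cell of shape `p`. -/
def recordCell (k : ℕ) : List (List ℕ) → List (List ℕ) → List (List ℕ)
  | _, [] => []
  | [], _ :: _ => [[k]]
  | q :: qs, p :: ps =>
    if q.length < p.length then (q ++ [k]) :: qs else q :: recordCell k qs ps

/-- The Edelman–Greene recording tableau `Q(w) = EG(w)`. -/
def Qtab (w : List ℕ) : List (List ℕ) :=
  (w.foldl (fun pq x =>
      let P' := insTab x pq.1
      (P', recordCell (pq.2.flatten.length + 1) pq.2 P'))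
    (([], []) : List (List ℕ) × List (List ℕ))).2

/-- A tableau is frozen if the cell in (0-indexed) row `i`, column `j` contains `i + j + 1`. -/
def Frozen (P : List (List ℕ)) : Prop :=
  ∀ i j, i < P.length → j < (P.getD i []).length → (P.getD i []).getD j 0 = i + j + 1

/-- All rows strictly increasing. -/
def RowStrict (P : List (List ℕ)) : Prop := ∀ r ∈ P, List.Pairwise (· < ·) r

/-- All columns strictly increasing. -/
def ColStrict (P : List (List ℕ)) : Prop :=
  ∀ i j, i + 1 < P.length → j < (P.getD (i + 1) []).length →
    (P.getD i []).getD j 0 < (P.getD (i + 1) []).getD j 0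

/-- Valid Young-diagram shape: nonempty rows of weakly decreasing lengths. -/
def TabShape (P : List (List ℕ)) : Prop :=
  (∀ r ∈ P, r ≠ []) ∧ ∀ i, i + 1 < P.length → (P.getD (i + 1) []).length ≤ (P.getD i []).length

/-- The reading word: rows left to right, from the bottom row up. -/
def readingWord (P : List (List ℕ)) : List ℕ := P.reverse.flatten

/-- A standard Young tableau: valid shape, strictly increasing rows and columns, and the
entries are `1, …, N` each exactly once. -/
def IsStandard (Q : List (List ℕ)) : Prop :=
  TabShape Q ∧ RowStrict Q ∧ ColStrict Q ∧ Q.flatten.Perm (List.range' 1 Q.flatten.length)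

/-- `Q` has the staircase shape `sc_n = (n-1, n-2, …, 1)`. -/
def StaircaseShape (n : ℕ) (Q : List (List ℕ)) : Prop :=
  Q.length = n - 1 ∧ ∀ i, i < n - 1 → (Q.getD i []).length = n - 1 - i

/-- A sorting network: a reduced word of the reverse permutation in `S_n`. -/
def IsSortingNetwork (n : ℕ) (w : List ℕ) : Prop :=
  IsReducedWord n Fin.revPerm w

/-- Every intermediate permutation of the word avoids 132. -/
def Avoiding132 (n : ℕ) (w : List ℕ) : Prop :=
  ∀ k, k ≤ w.length → Avoids132 (permOfWord n (w.take k))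

/-- Every intermediate permutation of the word avoids 312. -/
def Avoiding312 (n : ℕ) (w : List ℕ) : Prop :=
  ∀ k, k ≤ w.length → Avoids312 (permOfWord n (w.take k))

/-- `c` is the column word of `Q`: its `k`-th letter (1-indexed) is the (1-indexed) column
of the entry `k` in `Q`. -/
def IsColumnWord (Q : List (List ℕ)) (c : List ℕ) : Prop :=
  c.length = Q.flatten.length ∧
  ∀ k, k < c.length → ∃ i j, i < Q.length ∧ j < (Q.getD i []).length ∧
    (Q.getD i []).getD j 0 = k + 1 ∧ c.getD k 0 = j + 1

/-- All anti-diagonals of `Q` increase downwards: `Q_{i,j} > Q_{i-1,j+1}` (1-indexed). -/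
def AntiDiagDown (Q : List (List ℕ)) : Prop :=
  ∀ i j, i + 1 < Q.length → j < (Q.getD (i + 1) []).length → j + 1 < (Q.getD i []).length →
    (Q.getD i []).getD (j + 1) 0 < (Q.getD (i + 1) []).getD j 0

/-! ### Auxiliary machinery for Statement 5 -/

/-- Intermediate "mixed" tableau during insertion of a row `v` on top of rows `rs`. -/
def mixT : ℕ → List ℕ → List (List ℕ) → List (List ℕ)
  | j, v, [] => if j = 0 then [] else [v.take j]
  | j, v, r :: rs => (v.take j ++ r.drop j) :: mixT j r rs

/-- Chain condition: `v` sorted and nonempty, rows weakly decreasing in length,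
column-strict between consecutive rows. -/
def EGChain : List ℕ → List (List ℕ) → Prop
  | v, [] => List.Pairwise (· < ·) v ∧ v ≠ []
  | v, r :: rs => List.Pairwise (· < ·) v ∧ v ≠ [] ∧ r.length ≤ v.length ∧
      (∀ j, j < r.length → v.getD j 0 < r.getD j 0) ∧ EGChain r rs

lemma take_succ_getD {v : List ℕ} {j : ℕ} (hj : j < v.length) :
    v.take (j + 1) = v.take j ++ [v.getD j 0] := by
  rw [List.take_succ, List.getElem?_eq_getElem hj, List.getD_eq_getElem v 0 hj]
  rfl

lemma mem_take_lt {v : List ℕ} (hs : List.Pairwise (· < ·) v) {j : ℕ} (hj : j < v.length) :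
    ∀ y ∈ v.take j, y < v.getD j 0 := by
  intro y hy
  have hsplit : v.take j ++ v.drop j = v := List.take_append_drop j v
  have hp : List.Pairwise (· < ·) (v.take j ++ v.drop j) := by rw [hsplit]; exact hs
  have := (List.pairwise_append.mp hp).2.2
  apply this y hy
  rw [List.drop_eq_getElem_cons hj, List.getD_eq_getElem v 0 hj]
  exact List.mem_cons_self

lemma insRow_append (x : ℕ) (l : List ℕ) (h : ∀ y ∈ l, y < x) :
    insRow x l = (l ++ [x], none) := by
  induction l with
  | nil => rfl
  | cons a t ih =>
    have ha : a < x := h a (List.mem_cons_self)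
    simp [insRow, if_pos ha, ih (fun y hy => h y (List.mem_cons_of_mem _ hy))]

lemma insRow_replace (x b : ℕ) (a c : List ℕ) (ha : ∀ y ∈ a, y < x) (hb : x < b) :
    insRow x (a ++ b :: c) = (a ++ x :: c, some b) := by
  induction a with
  | nil =>
    simp only [List.nil_append, insRow]
    rw [if_neg (by omega), if_neg (by omega)]
  | cons z t ih =>
    have hz : z < x := ha z (List.mem_cons_self)
    have ih' := ih (fun y hy => ha y (List.mem_cons_of_mem _ hy))
    simp only [List.cons_append, insRow, if_pos hz]
    rw [ih']

lemma insTab_cons_none {x : ℕ} {r : List ℕ} {rs : List (List ℕ)} {l : List ℕ}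
    (h : insRow x r = (l, none)) : insTab x (r :: rs) = l :: rs := by
  simp [insTab, h]

lemma insTab_cons_some {x : ℕ} {r : List ℕ} {rs : List (List ℕ)} {l : List ℕ} {y : ℕ}
    (h : insRow x r = (l, some y)) : insTab x (r :: rs) = l :: insTab y rs := by
  simp [insTab, h]

lemma mixT_zero (rs : List (List ℕ)) : ∀ v, mixT 0 v rs = rs := by
  induction rs with
  | nil => intro v; rfl
  | cons r rs ih => intro v; simp [mixT, ih r]

lemma mixT_full (rs : List (List ℕ)) : ∀ (v : List ℕ) (j : ℕ), EGChain v rs →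
    v.length ≤ j → mixT j v rs = v :: rs := by
  induction rs with
  | nil =>
    intro v j hch hj
    obtain ⟨_, hne⟩ := hch
    have hv : 0 < v.length := List.length_pos_iff.mpr hne
    rw [mixT, if_neg (by omega), List.take_of_length_le hj]
  | cons r rs ih =>
    intro v j hch hj
    obtain ⟨_, _, hlen, _, hch'⟩ := hch
    rw [mixT, List.take_of_length_le hj, List.drop_eq_nil_of_le (by omega),
      List.append_nil, ih r j hch' (by omega)]

lemma cascade (rs : List (List ℕ)) : ∀ (v : List ℕ) (j : ℕ), EGChain v rs →
    j < v.length → insTab (v.getD j 0) (mixT j v rs) = mixT (j + 1) v rs := by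
  induction rs with
  | nil =>
    intro v j hch hj
    obtain ⟨hs, _⟩ := hch
    by_cases hj0 : j = 0
    · subst hj0
      rw [mixT, if_pos rfl, mixT, if_neg (by omega), take_succ_getD hj]
      rfl
    · rw [mixT, if_neg hj0, mixT, if_neg (by omega)]
      have h := insRow_append (v.getD j 0) (v.take j) (mem_take_lt hs hj)
      show insTab _ (v.take j :: ([] : List (List ℕ))) = _
      rw [insTab_cons_none h, ← take_succ_getD hj]
  | cons r rs ih =>
    intro v j hch hj
    obtain ⟨hs, hne, hlen, hcol, hch'⟩ := hch
    rw [mixT, mixT]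
    by_cases hjr : j < r.length
    · have hrdrop : r.drop j = r.getD j 0 :: r.drop (j + 1) := by
        rw [List.drop_eq_getElem_cons hjr, List.getD_eq_getElem r 0 hjr]
      rw [hrdrop]
      have h := insRow_replace (v.getD j 0) (r.getD j 0) (v.take j) (r.drop (j + 1))
        (mem_take_lt hs hj) (hcol j hjr)
      rw [insTab_cons_some h, ih r j hch' hjr]
      congr 1
      rw [take_succ_getD hj, List.append_assoc]
      rfl
    · have hrd : r.drop j = [] := List.drop_eq_nil_of_le (by omega)
      have hrd' : r.drop (j + 1) = [] := List.drop_eq_nil_of_le (by omega)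
      rw [hrd, List.append_nil]
      have h := insRow_append (v.getD j 0) (v.take j) (mem_take_lt hs hj)
      rw [insTab_cons_none h, ← take_succ_getD hj, hrd', List.append_nil,
        mixT_full rs r j hch' (by omega), mixT_full rs r (j + 1) hch' (by omega)]

lemma stage (v : List ℕ) (rs : List (List ℕ)) (hch : EGChain v rs) :
    ∀ k, k ≤ v.length →
      (v.take k).foldl (fun t x => insTab x t) rs = mixT k v rs := by
  intro k
  induction k with
  | zero => intro _; rw [List.take_zero, List.foldl_nil, mixT_zero]
  | succ k ihk =>
    intro hk
    have hkv : k < v.length := by omega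
    rw [take_succ_getD hkv, List.foldl_append, ihk (by omega), List.foldl_cons,
      List.foldl_nil, cascade rs v k hch hkv]

lemma insert_row (v : List ℕ) (rs : List (List ℕ)) (hch : EGChain v rs) :
    v.foldl (fun t x => insTab x t) rs = v :: rs := by
  have h1 := stage v rs hch v.length (le_refl _)
  rw [List.take_length] at h1
  rw [h1]
  have hne : v ≠ [] := by
    cases rs with
    | nil => exact hch.2
    | cons r rs' => exact hch.2.1
  cases rs with
  | nil =>
    rw [mixT, if_neg (by have := List.length_pos_iff.mpr hne; omega),
      List.take_of_length_le (le_refl _)]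
  | cons r rs' => exact mixT_full _ v v.length hch (le_refl _)

lemma tabShape_tail {v : List ℕ} {rs : List (List ℕ)} (h : TabShape (v :: rs)) :
    TabShape rs := by
  refine ⟨fun r hr => h.1 r (List.mem_cons_of_mem _ hr), fun i hi => ?_⟩
  have := h.2 (i + 1) (by simpa using Nat.succ_lt_succ hi)
  simpa using this

lemma rowStrict_tail {v : List ℕ} {rs : List (List ℕ)} (h : RowStrict (v :: rs)) :
    RowStrict rs := fun r hr => h r (List.mem_cons_of_mem _ hr)

lemma colStrict_tail {v : List ℕ} {rs : List (List ℕ)} (h : ColStrict (v :: rs)) :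
    ColStrict rs := by
  intro i j hi hj
  have := h (i + 1) j (by simpa using Nat.succ_lt_succ hi) (by simpa using hj)
  simpa using this

lemma chain_cons : ∀ (rs : List (List ℕ)) (v : List ℕ), TabShape (v :: rs) →
    RowStrict (v :: rs) → ColStrict (v :: rs) → EGChain v rs := by
  intro rs
  induction rs with
  | nil =>
    intro v h1 h2 _
    exact ⟨h2 v (List.mem_cons_self), h1.1 v (List.mem_cons_self)⟩
  | cons r rs' ih =>
    intro v h1 h2 h3
    refine ⟨h2 v (List.mem_cons_self), h1.1 v (List.mem_cons_self), ?_, ?_, ?_⟩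
    · have := h1.2 0 (by simp)
      simpa using this
    · intro j hj
      have := h3 0 j (by simp) (by simpa using hj)
      simpa using this
    · exact ih r (tabShape_tail h1) (rowStrict_tail h2) (colStrict_tail h3)

lemma Ptab_readingWord_aux : ∀ (P : List (List ℕ)), TabShape P → RowStrict P →
    ColStrict P → Ptab (readingWord P) = P := by
  intro P
  induction P with
  | nil => intro _ _ _; rfl
  | cons v rs ih =>
    intro h1 h2 h3
    have hrw : readingWord (v :: rs) = readingWord rs ++ v := by
      simp [readingWord]
    rw [hrw]
    show (readingWord rs ++ v).foldl (fun t x => insTab x t) [] = v :: rs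
    rw [List.foldl_append]
    have hP : (readingWord rs).foldl (fun t x => insTab x t) [] = rs :=
      ih (tabShape_tail h1) (rowStrict_tail h2) (colStrict_tail h3)
    rw [hP]
    exact insert_row v rs (chain_cons rs v h1 h2 h3)

/-- if `P` is a row- and column-strict Young tableau (with positive entries),
then Edelman–Greene insertion of its reading word reproduces `P`. -/
theorem Ptab_readingWord (P : List (List ℕ)) (hshape : TabShape P)
    (hrow : RowStrict P) (hcol : ColStrict P)
    (hpos : ∀ r ∈ P, ∀ x ∈ r, 1 ≤ x) :
    Ptab (readingWord P) = P := Ptab_readingWord_aux P hshape hrow hcol
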